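/- T(2,3,2) = -(\pi^2/6)\zeta(5) + 2\zeta(7). -/

import Mathlib

/-- The Tornheim double series with natural number exponents. -/
noncomputable def tornheimN (a b c : ℕ) : ℝ :=
  ∑' n : ℕ+, ∑' m : ℕ+,
    1 / (((n : ℕ) : ℝ) ^ a * ((m : ℕ) : ℝ) ^ b * (((n : ℕ) + (m : ℕ) : ℕ) : ℝ) ^ c)

open Function Set Filter Complex

namespace Torn

/-- The summand of the Tornheim series, as a function on `ℕ+ × ℕ+`. -/
noncomputable def f (a b c : ℕ) (p : ℕ+ × ℕ+) : ℝ :=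
  ((p.1 : ℝ) ^ a * (p.2 : ℝ) ^ b * ((p.1 : ℝ) + (p.2 : ℝ)) ^ c)⁻¹

noncomputable def T (a b c : ℕ) : ℝ := ∑' p : ℕ+ × ℕ+, f a b c p

noncomputable def Z (a : ℕ) : ℝ := ∑' n : ℕ+, ((n : ℝ) ^ a)⁻¹

lemma f_nonneg (a b c : ℕ) (p : ℕ+ × ℕ+) : 0 ≤ f a b c p := by
  unfold f; positivity

lemma one_le_pnat_real (n : ℕ+) : (1 : ℝ) ≤ (n : ℝ) := by
  exact_mod_cast n.one_le

lemma pnat_real_pos (n : ℕ+) : (0 : ℝ) < (n : ℝ) := by positivity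

/-- Summability of the basic zeta series over `ℕ+`. -/
lemma summable_Z {a : ℕ} (ha : 2 ≤ a) : Summable (fun n : ℕ+ => ((n : ℝ) ^ a)⁻¹) := by
  have h : Summable (fun n : ℕ => ((n : ℝ) ^ a)⁻¹) := by
    simpa using Real.summable_nat_pow_inv.mpr (by omega : 1 < a)
  exact h.comp_injective (fun x y h => PNat.coe_injective h)

lemma summable_f {a b c c1 c2 : ℕ} (h1 : 2 ≤ a + c1) (h2 : 2 ≤ b + c2) (h3 : c1 + c2 ≤ c) :
    Summable (f a b c) := by
  have hZ2 : Summable (fun n : ℕ+ => ((n : ℝ) ^ 2)⁻¹) := summable_Z le_rfl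
  have hmaj : Summable (fun p : ℕ+ × ℕ+ => ((p.1 : ℝ) ^ 2)⁻¹ * ((p.2 : ℝ) ^ 2)⁻¹) :=
    hZ2.mul_of_nonneg hZ2 (fun n => by positivity) (fun n => by positivity)
  refine Summable.of_nonneg_of_le (f_nonneg a b c) (fun p => ?_) hmaj
  obtain ⟨n, m⟩ := p
  have hn := one_le_pnat_real n
  have hm := one_le_pnat_real m
  have hnm : (1 : ℝ) ≤ (n : ℝ) + (m : ℝ) := by linarith
  rw [f, ← mul_inv]
  apply inv_anti₀ (by positivity)
  calc (n : ℝ) ^ 2 * (m : ℝ) ^ 2 ≤ (n : ℝ) ^ (a + c1) * (m : ℝ) ^ (b + c2) := by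
        apply mul_le_mul (pow_le_pow_right₀ hn h1) (pow_le_pow_right₀ hm h2) (by positivity)
          (by positivity)
    _ = ((n : ℝ) ^ a * (m : ℝ) ^ b) * ((n : ℝ) ^ c1 * (m : ℝ) ^ c2) := by ring
    _ ≤ ((n : ℝ) ^ a * (m : ℝ) ^ b) * (((n : ℝ) + (m : ℝ)) ^ c1 * ((n : ℝ) + (m : ℝ)) ^ c2) := by
        apply mul_le_mul_of_nonneg_left _ (by positivity)
        apply mul_le_mul (pow_le_pow_left₀ (by positivity) (by linarith) c1)
          (pow_le_pow_left₀ (by positivity) (by linarith) c2) (by positivity) (by positivity)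
    _ = ((n : ℝ) ^ a * (m : ℝ) ^ b) * ((n : ℝ) + (m : ℝ)) ^ (c1 + c2) := by rw [pow_add]
    _ ≤ (n : ℝ) ^ a * (m : ℝ) ^ b * ((n : ℝ) + (m : ℝ)) ^ c := by
        apply mul_le_mul_of_nonneg_left (pow_le_pow_right₀ hnm h3) (by positivity)

lemma T_swap (a b c : ℕ) : T a b c = T b a c := by
  rw [T, T, ← (Equiv.prodComm ℕ+ ℕ+).tsum_eq (f b a c)]
  apply tsum_congr
  intro p
  simp only [f, Equiv.prodComm, Equiv.coe_fn_mk, Prod.fst_swap, Prod.snd_swap]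
  ring_nf

lemma f_rec (a b c : ℕ) (p : ℕ+ × ℕ+) :
    f (a+1) (b+1) c p = f a (b+1) (c+1) p + f (a+1) b (c+1) p := by
  obtain ⟨n, m⟩ := p
  have hn : (0:ℝ) < (n:ℝ) := by positivity
  have hm : (0:ℝ) < (m:ℝ) := by positivity
  have hnm : (0:ℝ) < (n:ℝ) + (m:ℝ) := by linarith
  simp only [f]
  simp only [inv_eq_one_div]
  rw [div_add_div _ _ (by positivity) (by positivity), div_eq_div_iff (by positivity) (by positivity)]
  ring

lemma T_rec {a b c : ℕ} (h1 : Summable (f a (b+1) (c+1))) (h2 : Summable (f (a+1) b (c+1))) :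
    T (a+1) (b+1) c = T a (b+1) (c+1) + T (a+1) b (c+1) := by
  rw [T, T, T, ← Summable.tsum_add h1 h2]
  exact tsum_congr (f_rec a b c)

lemma T_prod {a b : ℕ} (ha : Summable (fun n : ℕ+ => ((n:ℝ)^a)⁻¹))
    (hb : Summable (fun n : ℕ+ => ((n:ℝ)^b)⁻¹)) : T a b 0 = Z a * Z b := by
  have key := tsum_mul_tsum_of_summable_norm (f := fun n : ℕ+ => ((n:ℝ)^a)⁻¹)
    (g := fun n : ℕ+ => ((n:ℝ)^b)⁻¹) (by simpa [abs_of_nonneg, Real.norm_eq_abs] using ha)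
    (by simpa [Real.norm_eq_abs] using hb)
  rw [T, Z, Z, key]
  apply tsum_congr
  intro p
  simp [f, mul_inv, mul_comm]
def iLT (q : ℕ+ × ℕ+) : ℕ+ × ℕ+ := (q.2, q.2 + q.1)
def iGT (q : ℕ+ × ℕ+) : ℕ+ × ℕ+ := (q.2 + q.1, q.2)
def iEQ (k : ℕ+) : ℕ+ × ℕ+ := (k, k)

lemma iLT_inj : Injective iLT := by
  rintro ⟨a, b⟩ ⟨c, d⟩ h
  simp only [iLT, Prod.mk.injEq] at h
  obtain ⟨h1, h2⟩ := h
  subst h1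
  simp [add_left_cancel h2]

lemma iGT_inj : Injective iGT := by
  rintro ⟨a, b⟩ ⟨c, d⟩ h
  simp only [iGT, Prod.mk.injEq] at h
  obtain ⟨h2, h1⟩ := h
  subst h1
  simp [add_left_cancel h2]

lemma iEQ_inj : Injective iEQ := by
  intro a b h
  simpa [iEQ, Prod.mk.injEq] using h

lemma range_iLT : range iLT = {p : ℕ+ × ℕ+ | p.1 < p.2} := by
  ext ⟨a, b⟩
  constructor
  · rintro ⟨⟨x, y⟩, h⟩
    cases h
    exact PNat.lt_add_right y x
  · intro h
    exact ⟨(b - a, a), by simp [iLT, PNat.add_sub_of_lt h]⟩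

lemma range_iGT : range iGT = {p : ℕ+ × ℕ+ | p.2 < p.1} := by
  ext ⟨a, b⟩
  constructor
  · rintro ⟨⟨x, y⟩, h⟩
    cases h
    exact PNat.lt_add_right y x
  · intro h
    exact ⟨(a - b, b), by simp [iGT, PNat.add_sub_of_lt h]⟩

lemma range_iEQ : range iEQ = {p : ℕ+ × ℕ+ | p.1 = p.2} := by
  ext ⟨a, b⟩
  constructor
  · rintro ⟨x, h⟩
    cases h
    rfl
  · intro h
    exact ⟨a, by simp only [iEQ]; exact Prod.ext rfl h⟩

section Stuffle
variable {b c : ℕ}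

/-- the product function `(m^b k^c)⁻¹` on the plane -/
noncomputable def g (b c : ℕ) (p : ℕ+ × ℕ+) : ℝ := ((p.1 : ℝ) ^ b)⁻¹ * ((p.2 : ℝ) ^ c)⁻¹

lemma summable_g (hb : 2 ≤ b) (hc : 2 ≤ c) : Summable (g b c) :=
  (summable_Z hb).mul_of_nonneg (summable_Z hc) (fun n => by positivity) (fun n => by positivity)

lemma g_split (p : ℕ+ × ℕ+) :
    g b c p = indicator {p : ℕ+ × ℕ+ | p.1 < p.2} (g b c) p
      + indicator {p : ℕ+ × ℕ+ | p.1 = p.2} (g b c) p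
      + indicator {p : ℕ+ × ℕ+ | p.2 < p.1} (g b c) p := by
  classical
  simp only [indicator_apply, mem_setOf_eq]
  rcases lt_trichotomy p.1 p.2 with h | h | h
  · rw [if_pos h, if_neg (by exact h.ne), if_neg (by exact lt_asymm h), add_zero, add_zero]
  · rw [if_neg (by simp [h]), if_pos h, if_neg (by simp [h]), zero_add, add_zero]
  · rw [if_neg (by exact lt_asymm h), if_neg (by exact h.ne'), if_pos h, zero_add, zero_add]

lemma tsum_indicator_lt : ∑' p, indicator {p : ℕ+ × ℕ+ | p.1 < p.2} (g b c) p = T 0 b c := by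
  rw [← iLT_inj.tsum_eq (f := indicator {p : ℕ+ × ℕ+ | p.1 < p.2} (g b c))
    (support_indicator_subset.trans (by rw [range_iLT]))]
  apply tsum_congr
  intro q
  rw [indicator_of_mem (by rw [← range_iLT]; exact mem_range_self q)]
  obtain ⟨n, m⟩ := q
  simp only [g, f, iLT]
  push_cast
  rw [pow_zero, one_mul, mul_inv]
  ring

lemma tsum_indicator_gt : ∑' p, indicator {p : ℕ+ × ℕ+ | p.2 < p.1} (g b c) p = T 0 c b := by
  rw [← iGT_inj.tsum_eq (f := indicator {p : ℕ+ × ℕ+ | p.2 < p.1} (g b c))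
    (support_indicator_subset.trans (by rw [range_iGT]))]
  apply tsum_congr
  intro q
  rw [indicator_of_mem (by rw [← range_iGT]; exact mem_range_self q)]
  obtain ⟨n, m⟩ := q
  simp only [g, f, iGT]
  push_cast
  rw [pow_zero, one_mul, mul_inv]
  ring

lemma tsum_indicator_eq : ∑' p, indicator {p : ℕ+ × ℕ+ | p.1 = p.2} (g b c) p = Z (b + c) := by
  rw [← iEQ_inj.tsum_eq (f := indicator {p : ℕ+ × ℕ+ | p.1 = p.2} (g b c))
    (support_indicator_subset.trans (by rw [range_iEQ]))]
  apply tsum_congr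
  intro k
  rw [indicator_of_mem (by rw [← range_iEQ]; exact mem_range_self k)]
  simp only [g, iEQ]
  rw [pow_add, mul_inv]

lemma stuffle (hb : 2 ≤ b) (hc : 2 ≤ c) :
    Z b * Z c = T 0 b c + Z (b + c) + T 0 c b := by
  have hg := summable_g hb hc
  have h1 : Summable (indicator {p : ℕ+ × ℕ+ | p.1 < p.2} (g b c)) := hg.indicator _
  have h2 : Summable (indicator {p : ℕ+ × ℕ+ | p.1 = p.2} (g b c)) := hg.indicator _
  have h3 : Summable (indicator {p : ℕ+ × ℕ+ | p.2 < p.1} (g b c)) := hg.indicator _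
  have key : ∑' p, g b c p = T 0 b c + Z (b+c) + T 0 c b := by
    rw [tsum_congr g_split, Summable.tsum_add (h1.add h2) h3, Summable.tsum_add h1 h2,
      tsum_indicator_lt, tsum_indicator_gt, tsum_indicator_eq]
  rw [← key, Z, Z, tsum_mul_tsum_of_summable_norm
    (by simpa [Real.norm_eq_abs, abs_of_nonneg] using summable_Z hb)
    (by simpa [Real.norm_eq_abs, abs_of_nonneg] using summable_Z hc)]
  rfl

end Stuffle

noncomputable def harm (m : ℕ) : ℝ := ∑ i ∈ Finset.range m, ((i : ℝ) + 1)⁻¹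

lemma harm_nonneg (m : ℕ) : 0 ≤ harm m := Finset.sum_nonneg fun i _ => by positivity

lemma harm_le (m : ℕ) : harm m ≤ m := by
  calc harm m ≤ ∑ i ∈ Finset.range m, (1 : ℝ) := by
        apply Finset.sum_le_sum
        intro i _
        rw [inv_le_one_iff₀]
        right; linarith [Nat.cast_nonneg (α := ℝ) i]
    _ = m := by simp

lemma harm_succ (m : ℕ) : harm (m + 1) = harm m + ((m : ℝ) + 1)⁻¹ := by
  rw [harm, Finset.sum_range_succ]; rfl

/-- The telescoping tail sum: `∑_{i≥0} 1/((i+k+1)(i+1)) = harm k / k`. -/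
lemma hasSum_tail {k : ℕ} (hk : 0 < k) :
    HasSum (fun i : ℕ => (((i : ℝ) + k + 1) * ((i : ℝ) + 1))⁻¹) (harm k / k) := by
  have hkR : (0:ℝ) < k := by exact_mod_cast hk
  have hsum : Summable (fun i : ℕ => (((i : ℝ) + k + 1) * ((i : ℝ) + 1))⁻¹) := by
    apply Summable.of_nonneg_of_le (fun i => by positivity)
      (fun i => ?_) ((Real.summable_one_div_nat_pow.mpr one_lt_two).comp_injective
        (add_left_injective 1))
    have h1 : (0:ℝ) < (i:ℝ) + 1 := by positivity
    simp only [comp_apply, one_div]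
    rw [← Nat.cast_add_one, Nat.cast_add_one]
    apply inv_anti₀ (by positivity)
    rw [sq]
    apply mul_le_mul_of_nonneg_right _ h1.le
    linarith
  rw [hsum.hasSum_iff_tendsto_nat]
  -- partial sums
  have key : ∀ N : ℕ, ∑ i ∈ Finset.range N, (((i : ℝ) + k + 1) * ((i : ℝ) + 1))⁻¹
      = (harm k - (harm (N + k) - harm N)) / k := by
    intro N
    have step : ∀ i : ℕ, (((i : ℝ) + k + 1) * ((i : ℝ) + 1))⁻¹
        = (((i:ℝ) + 1)⁻¹ - ((i:ℝ) + k + 1)⁻¹) / k := by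
      intro i
      have h1 : (0:ℝ) < (i:ℝ) + 1 := by positivity
      have h2 : (0:ℝ) < (i:ℝ) + k + 1 := by positivity
      field_simp
      ring
    have e1 : ∑ i ∈ Finset.range N, ((i:ℝ) + k + 1)⁻¹ = harm (N + k) - harm k := by
      rw [add_comm N k, harm, Finset.sum_range_add, harm, add_sub_cancel_left]
      apply Finset.sum_congr rfl
      intro x _
      push_cast
      ring_nf
    rw [Finset.sum_congr rfl (fun i _ => step i), ← Finset.sum_div, Finset.sum_sub_distrib, e1,
      ← harm]
    ring
  rw [funext key]
  have hR : Tendsto (fun N : ℕ => harm (N + k) - harm N) atTop (nhds 0) := by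
    have hb : ∀ N : ℕ, harm (N + k) - harm N ≤ k * ((N:ℝ) + 1)⁻¹ := by
      intro N
      have := Finset.sum_range_add (fun j => ((j : ℝ) + 1)⁻¹) N k
      rw [harm, this, ← harm]
      have : ∑ i ∈ Finset.range k, (((N + i : ℕ) :ℝ) + 1)⁻¹ ≤ ∑ i ∈ Finset.range k, ((N:ℝ) + 1)⁻¹ := by
        apply Finset.sum_le_sum
        intro i _
        apply inv_anti₀ (by positivity)
        push_cast
        linarith [Nat.cast_nonneg (α := ℝ) i]
      simp only [Finset.sum_const, Finset.card_range, nsmul_eq_mul] at this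
      linarith
    have hgeq : ∀ N : ℕ, 0 ≤ harm (N + k) - harm N := by
      intro N
      have := Finset.sum_range_add (fun j => ((j : ℝ) + 1)⁻¹) N k
      rw [harm, this, ← harm]
      have : 0 ≤ ∑ i ∈ Finset.range k, (((N + i : ℕ) :ℝ) + 1)⁻¹ :=
        Finset.sum_nonneg fun i _ => by positivity
      linarith
    apply squeeze_zero hgeq hb
    have := (tendsto_const_div_atTop_nhds_zero_nat (k : ℝ))
    simp only [div_eq_mul_inv] at this
    exact this.comp (tendsto_add_atTop_nat 1) |>.congr (by intro n; simp only [comp_apply]; push_cast; ring_nf)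
  have : Tendsto (fun N : ℕ => (harm k - (harm (N + k) - harm N)) / k) atTop
      (nhds ((harm k - 0) / k)) := (tendsto_const_nhds.sub hR).div_const k
  simpa using this
noncomputable def phi (k : ℕ+) (n : ℕ+) : ℝ :=
  if n = k then 0 else ((n : ℝ) * ((n : ℝ) - (k : ℝ)))⁻¹

lemma hasSum_phi (k : ℕ+) :
    HasSum (phi k) (((k : ℝ) ^ 2)⁻¹ - harm ((k : ℕ) - 1) * ((k : ℝ))⁻¹) := by
  set K := (k : ℕ) - 1 with hK
  have hkK : (k : ℕ) = K + 1 := (Nat.succ_pred_eq_of_pos k.pos).symm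
  have hkR : (0:ℝ) < (k:ℝ) := by exact_mod_cast k.pos
  rw [← Equiv.pnatEquivNat.symm.hasSum_iff]
  set ψ : ℕ → ℝ := fun i => phi k (Equiv.pnatEquivNat.symm i) with hψ
  have tail : HasSum (fun i : ℕ => ψ (i + (k : ℕ))) (harm (k:ℕ) / (k:ℕ)) := by
    have hfun : (fun i : ℕ => ψ (i + (k : ℕ)))
        = fun i : ℕ => (((i : ℝ) + (k:ℕ) + 1) * ((i : ℝ) + 1))⁻¹ := by
      funext i
      simp only [ψ, Equiv.pnatEquivNat_symm_apply, phi]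
      rw [if_neg (by
        intro hcon
        have : i + (k:ℕ) + 1 = (k:ℕ) := by
          have := congrArg (PNat.val) hcon
          simpa [Nat.succPNat] using this
        omega)]
      have hco : ((Nat.succPNat (i + (k:ℕ)) : ℕ+) : ℝ) = (i:ℝ) + (k:ℝ) + 1 := by
        simp only [Nat.succPNat_coe]
        push_cast
        ring
      rw [hco]
      have : ((k:ℕ):ℝ) = ((k:ℕ+):ℝ) := rfl
      rw [this]
      ring_nf
    rw [hfun]
    exact_mod_cast hasSum_tail k.pos
  have finpart : ∑ i ∈ Finset.range (k:ℕ), ψ i = -2 * harm K / (k:ℝ) := by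
    rw [hkK, Finset.sum_range_succ]
    have hlast : ψ K = 0 := by
      simp only [ψ, Equiv.pnatEquivNat_symm_apply, phi]
      rw [if_pos]
      exact PNat.coe_injective (by simp [Nat.succPNat, hkK])
    rw [hlast, add_zero]
    have step : ∀ i ∈ Finset.range K, ψ i
        = (((i:ℝ) - K)⁻¹ - ((i:ℝ) + 1)⁻¹) / ((K:ℝ) + 1) := by
      intro i hi
      have hiK : i < K := Finset.mem_range.mp hi
      simp only [ψ, Equiv.pnatEquivNat_symm_apply, phi]
      rw [if_neg (by
        intro hcon
        have := congrArg (PNat.val) hcon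
        simp [Nat.succPNat] at this
        omega)]
      have hc : ((Nat.succPNat i : ℕ+) : ℝ) = (i:ℝ) + 1 := by
        simp only [Nat.succPNat_coe]; push_cast; ring
      rw [hc]
      have hkc : ((k:ℕ+) : ℝ) = (K:ℝ) + 1 := by rw [show ((k:ℕ+):ℝ) = (((k:ℕ)):ℝ) from rfl, hkK]; push_cast; ring
      rw [hkc]
      have h1 : (i:ℝ) + 1 ≠ 0 := by positivity
      have h2 : (i:ℝ) - K ≠ 0 := by
        have : (i:ℝ) < K := by exact_mod_cast hiK
        linarith
      have h3 : (K:ℝ) + 1 ≠ 0 := by positivity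
      rw [show (i:ℝ) + 1 - ((K:ℝ) + 1) = (i:ℝ) - K by ring]
      field_simp
      ring
    rw [Finset.sum_congr rfl step, ← Finset.sum_div, Finset.sum_sub_distrib]
    have hrefl : ∑ i ∈ Finset.range K, ((i:ℝ) - K)⁻¹ = - harm K := by
      rw [← Finset.sum_range_reflect (fun i => ((i:ℝ) - K)⁻¹) K]
      rw [harm, ← Finset.sum_neg_distrib]
      apply Finset.sum_congr rfl
      intro i hi
      have hiK : i < K := Finset.mem_range.mp hi
      have : ((K - 1 - i : ℕ) : ℝ) = (K:ℝ) - 1 - i := by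
        have h1 : i ≤ K - 1 := by omega
        have h2 : 1 ≤ K := by omega
        push_cast [Nat.cast_sub h1, Nat.cast_sub h2]
        ring
      rw [this]
      rw [show (K:ℝ) - 1 - (i:ℝ) - K = -((i:ℝ)+1) by ring]
      rw [inv_neg]
    rw [hrefl, harm, ← hkK]
    push_cast [hkK]
    ring
  have := (hasSum_nat_add_iff (f := ψ) (k:ℕ)).mp tail
  rw [finpart] at this
  convert this using 1
  · rfl
  · rfl
  rw [hkK]
  rw [show harm (K+1) = harm K + ((K:ℝ)+1)⁻¹ from harm_succ K]
  have h3 : ((K:ℝ) + 1) ≠ 0 := by positivity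
  push_cast
  field_simp
  ring
/-- The antisymmetric kernel, as a function of `(k, n)`. -/
noncomputable def hfun (p : ℕ+ × ℕ+) : ℝ :=
  if p.2 = p.1 then 0 else ((p.2 : ℝ) * (p.1 : ℝ) ^ 5 * ((p.2 : ℝ) - (p.1 : ℝ)))⁻¹

lemma hfun_comp_iLT (q : ℕ+ × ℕ+) : hfun (iLT q) = f 1 5 1 q := by
  obtain ⟨n, m⟩ := q
  have hne : (m + n : ℕ+) ≠ m := by
    intro hcon
    have := congrArg (PNat.val) hcon
    simp only [PNat.add_coe] at this
    have := n.pos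
    omega
  simp only [hfun, iLT, f]
  simp only [hne, if_false]
  have : ((m + n : ℕ+) : ℝ) = (m : ℝ) + (n : ℝ) := by push_cast; ring
  rw [this]
  rw [pow_one, pow_one]
  ring_nf

lemma hfun_comp_iGT (q : ℕ+ × ℕ+) : hfun (iGT q) = -f 1 1 5 q := by
  obtain ⟨n, m⟩ := q
  have hne : (m : ℕ+) ≠ m + n := by
    intro hcon
    have := congrArg (PNat.val) hcon
    simp only [PNat.add_coe] at this
    have := n.pos
    omega
  simp only [hfun, iGT, f]
  simp only [hne, if_false]
  have : ((m + n : ℕ+) : ℝ) = (m : ℝ) + (n : ℝ) := by push_cast; ring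
  rw [this, pow_one, pow_one]
  rw [show (m:ℝ) - ((m:ℝ) + (n:ℝ)) = -(n:ℝ) by ring]
  rw [show (m:ℝ) * ((m:ℝ) + (n:ℝ))^5 * -(n:ℝ) = -((n:ℝ) * (m:ℝ) * ((n:ℝ)+(m:ℝ))^5) by ring]
  rw [inv_neg]

lemma hfun_split (p : ℕ+ × ℕ+) :
    hfun p = indicator {p : ℕ+ × ℕ+ | p.1 < p.2} hfun p
      + indicator {p : ℕ+ × ℕ+ | p.2 < p.1} hfun p := by
  classical
  simp only [indicator_apply, mem_setOf_eq]
  rcases lt_trichotomy p.1 p.2 with h | h | h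
  · rw [if_pos h, if_neg (by exact lt_asymm h), add_zero]
  · rw [if_neg (by simp [h]), if_neg (by simp [h]), add_zero, hfun, if_pos h.symm]
  · rw [if_neg (by exact lt_asymm h), if_pos h, zero_add]

lemma indicator_lt_comp (q : ℕ+ × ℕ+) :
    indicator {p : ℕ+ × ℕ+ | p.1 < p.2} hfun (iLT q) = f 1 5 1 q := by
  rw [indicator_of_mem (by rw [← range_iLT]; exact mem_range_self q), hfun_comp_iLT]

lemma indicator_gt_comp (q : ℕ+ × ℕ+) :
    indicator {p : ℕ+ × ℕ+ | p.2 < p.1} hfun (iGT q) = -f 1 1 5 q := by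
  rw [indicator_of_mem (by rw [← range_iGT]; exact mem_range_self q), hfun_comp_iGT]

lemma summable_ind_lt : Summable (indicator {p : ℕ+ × ℕ+ | p.1 < p.2} hfun) := by
  rw [← iLT_inj.summable_iff (by
    intro p hp
    exact indicator_of_notMem (by rwa [← range_iLT]) _)]
  exact (summable_f (a:=1) (b:=5) (c:=1) (c1:=1) (c2:=0) (by norm_num) (by norm_num)
    (by norm_num)).congr (fun q => (indicator_lt_comp q).symm)

lemma summable_ind_gt : Summable (indicator {p : ℕ+ × ℕ+ | p.2 < p.1} hfun) := by
  rw [← iGT_inj.summable_iff (by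
    intro p hp
    exact indicator_of_notMem (by rwa [← range_iGT]) _)]
  exact ((summable_f (a:=1) (b:=1) (c:=5) (c1:=1) (c2:=1) (by norm_num) (by norm_num)
    (by norm_num)).neg).congr (fun q => (indicator_gt_comp q).symm)

lemma summable_hfun : Summable hfun :=
  ((summable_ind_lt.add summable_ind_gt).congr (fun p => (hfun_split p).symm))

lemma tsum_hfun_regions : ∑' p, hfun p = T 1 5 1 - T 1 1 5 := by
  rw [tsum_congr hfun_split, Summable.tsum_add summable_ind_lt summable_ind_gt]
  have e1 : ∑' p, indicator {p : ℕ+ × ℕ+ | p.1 < p.2} hfun p = T 1 5 1 := by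
    rw [← iLT_inj.tsum_eq (support_indicator_subset.trans (by rw [range_iLT]))]
    exact tsum_congr indicator_lt_comp
  have e2 : ∑' p, indicator {p : ℕ+ × ℕ+ | p.2 < p.1} hfun p = -T 1 1 5 := by
    rw [← iGT_inj.tsum_eq (support_indicator_subset.trans (by rw [range_iGT]))]
    rw [T, ← tsum_neg]
    exact tsum_congr indicator_gt_comp
  rw [e1, e2]
  ring
lemma hfun_eq (k n : ℕ+) : hfun (k, n) = ((k : ℝ) ^ 5)⁻¹ * phi k n := by
  simp only [hfun, phi]
  by_cases h : n = k
  · rw [if_pos h, if_pos h, mul_zero]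
  · rw [if_neg h, if_neg h, ← mul_inv]
    ring_nf

lemma hasSum_hfun_inner (k : ℕ+) :
    HasSum (fun n => hfun (k, n)) (((k:ℝ)^7)⁻¹ - harm ((k:ℕ) - 1) * ((k:ℝ)^6)⁻¹) := by
  have heq : (fun n : ℕ+ => hfun (k, n)) = fun n => ((k : ℝ) ^ 5)⁻¹ * phi k n :=
    funext (hfun_eq k)
  rw [heq]
  convert (hasSum_phi k).mul_left (((k : ℝ) ^ 5)⁻¹) using 1
  · rfl
  have hk : ((k:ℝ)) ≠ 0 := by positivity
  field_simp

/-- The harmonic-weighted series is summable. -/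
lemma summable_harm_series :
    Summable (fun k : ℕ+ => harm ((k:ℕ) - 1) * ((k:ℝ)^6)⁻¹) := by
  apply Summable.of_nonneg_of_le
    (fun k => mul_nonneg (harm_nonneg _) (by positivity))
    (fun k => ?_) (summable_Z (a := 5) (by norm_num))
  have h1 : harm ((k:ℕ) - 1) ≤ (k:ℝ) := by
    calc harm ((k:ℕ) - 1) ≤ (((k:ℕ) - 1 : ℕ) : ℝ) := harm_le _
      _ ≤ (k:ℝ) := by
          have : ((k:ℕ) - 1 : ℕ) ≤ (k:ℕ) := Nat.sub_le _ _
          exact_mod_cast this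
  calc harm ((k:ℕ) - 1) * ((k:ℝ)^6)⁻¹ ≤ (k:ℝ) * ((k:ℝ)^6)⁻¹ := by
        apply mul_le_mul_of_nonneg_right h1 (by positivity)
    _ = ((k:ℝ)^5)⁻¹ := by
        have hk : ((k:ℝ)) ≠ 0 := by positivity
        field_simp

lemma tsum_hfun_iterated :
    ∑' p, hfun p = Z 7 - ∑' k : ℕ+, harm ((k:ℕ) - 1) * ((k:ℝ)^6)⁻¹ := by
  rw [Summable.tsum_prod' summable_hfun (fun k => (hasSum_hfun_inner k).summable)]
  have : ∀ k : ℕ+, ∑' n, hfun (k, n) = ((k:ℝ)^7)⁻¹ - harm ((k:ℕ) - 1) * ((k:ℝ)^6)⁻¹ :=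
    fun k => (hasSum_hfun_inner k).tsum_eq
  rw [tsum_congr this, Summable.tsum_sub (summable_Z (by norm_num)) summable_harm_series]
  rfl

/-- the indicator function for `T 0 1 6` reindexed to pairs `(k, n)` with `n < k`. -/
noncomputable def w (p : ℕ+ × ℕ+) : ℝ :=
  indicator {p : ℕ+ × ℕ+ | p.2 < p.1} (fun p => ((p.2 : ℝ) * (p.1 : ℝ)^6)⁻¹) p

lemma w_comp_iGT (q : ℕ+ × ℕ+) : w (iGT q) = f 0 1 6 q := by
  rw [w, indicator_of_mem (by rw [← range_iGT]; exact mem_range_self q)]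
  obtain ⟨n, m⟩ := q
  simp only [iGT, f]
  have : ((m + n : ℕ+) : ℝ) = (m : ℝ) + (n : ℝ) := by push_cast; ring
  rw [this, pow_zero, pow_one, one_mul]
  ring_nf

lemma summable_w : Summable w := by
  rw [← iGT_inj.summable_iff (by
    intro p hp
    exact indicator_of_notMem (by rwa [← range_iGT]) _)]
  exact (summable_f (a:=0) (b:=1) (c:=6) (c1:=2) (c2:=1) (by norm_num) (by norm_num)
    (by norm_num)).congr (fun q => (w_comp_iGT q).symm)

lemma tsum_w : ∑' p, w p = T 0 1 6 := by
  rw [← iGT_inj.tsum_eq (f := w) (support_subset_iff'.mpr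
    (fun p hp => indicator_of_notMem (by rwa [← range_iGT]) _))]
  exact tsum_congr w_comp_iGT

lemma w_inner_eq_sum (k : ℕ+) :
    ∑' n : ℕ+, w (k, n) = harm ((k:ℕ) - 1) * ((k:ℝ)^6)⁻¹ := by
  rw [← Equiv.pnatEquivNat.symm.tsum_eq (fun n => w (k, n))]
  have hvanish : ∀ i ∉ Finset.range (k:ℕ), w (k, Equiv.pnatEquivNat.symm i) = 0 := by
    intro i hi
    have hik : (k:ℕ) ≤ i := by simpa using hi
    apply indicator_of_notMem
    simp only [mem_setOf_eq, not_lt]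
    change (k:ℕ+) ≤ Nat.succPNat i
    rw [← PNat.coe_le_coe, Nat.succPNat_coe]
    omega
  rw [tsum_eq_sum hvanish]
  set K := (k : ℕ) - 1 with hK
  have hkK : (k : ℕ) = K + 1 := (Nat.succ_pred_eq_of_pos k.pos).symm
  rw [hkK, Finset.sum_range_succ]
  have hlast : w (k, Equiv.pnatEquivNat.symm K) = 0 := by
    apply indicator_of_notMem
    simp only [mem_setOf_eq, not_lt]
    change (k:ℕ+) ≤ Nat.succPNat K
    rw [← PNat.coe_le_coe, Nat.succPNat_coe]
    omega
  rw [hlast, add_zero]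
  have hterm : ∀ i ∈ Finset.range K, w (k, Equiv.pnatEquivNat.symm i)
      = ((i:ℝ) + 1)⁻¹ * ((k:ℝ)^6)⁻¹ := by
    intro i hi
    have hiK : i < K := Finset.mem_range.mp hi
    rw [w, indicator_of_mem]
    · have : ((Equiv.pnatEquivNat.symm i : ℕ+) : ℝ) = (i:ℝ) + 1 := by
        simp [Equiv.pnatEquivNat, Nat.succPNat]
      simp only [this]
      rw [← mul_inv]
    · simp only [mem_setOf_eq]
      change Nat.succPNat i < (k:ℕ+)
      rw [← PNat.coe_lt_coe, Nat.succPNat_coe]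
      omega
  rw [Finset.sum_congr rfl hterm, ← Finset.sum_mul, harm, ← hkK]

lemma tsum_w_iterated : ∑' p, w p = ∑' k : ℕ+, harm ((k:ℕ) - 1) * ((k:ℝ)^6)⁻¹ := by
  rw [Summable.tsum_prod' summable_w (fun k => ?_)]
  · exact tsum_congr w_inner_eq_sum
  · apply summable_of_ne_finset_zero (s := Finset.Iio k)
    intro n hn
    apply indicator_of_notMem
    simp only [mem_setOf_eq, not_lt]
    simpa using hn

lemma euler : T 1 5 1 - T 1 1 5 = Z 7 - T 0 1 6 := by
  rw [← tsum_hfun_regions, tsum_hfun_iterated, ← tsum_w, tsum_w_iterated]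
lemma summable_f_inner {a b c : ℕ} (hbc : 2 ≤ b + c) (n : ℕ+) :
    Summable (fun m : ℕ+ => f a b c (n, m)) := by
  apply Summable.of_nonneg_of_le (fun m => by unfold f; positivity) (fun m => ?_)
    (summable_Z (a := 2) le_rfl)
  have hn : (1:ℝ) ≤ (n:ℝ) := by exact_mod_cast n.one_le
  have hm : (1:ℝ) ≤ (m:ℝ) := by exact_mod_cast m.one_le
  rw [f]
  apply inv_anti₀ (by positivity)
  calc (m:ℝ)^2 ≤ (m:ℝ)^(b+c) := pow_le_pow_right₀ hm hbc
    _ = (m:ℝ)^b * (m:ℝ)^c := pow_add _ _ _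
    _ ≤ (m:ℝ)^b * ((n:ℝ)+(m:ℝ))^c := by
        apply mul_le_mul_of_nonneg_left (pow_le_pow_left₀ (by positivity) (by linarith) c)
          (by positivity)
    _ ≤ (n:ℝ)^a * ((m:ℝ)^b * ((n:ℝ)+(m:ℝ))^c) := by
        apply le_mul_of_one_le_left (by positivity) (one_le_pow₀ hn)
    _ = (n:ℝ)^a * (m:ℝ)^b * ((n:ℝ)+(m:ℝ))^c := (mul_assoc _ _ _).symm

/-- ℕ-indexed and ℕ+-indexed zeta sums agree. -/
lemma Z_eq_nat_tsum {a : ℕ} (ha : 1 ≤ a) : Z a = ∑' n : ℕ, ((n : ℝ) ^ a)⁻¹ := by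
  rw [Z]
  apply PNat.coe_injective.tsum_eq (f := fun n : ℕ => ((n:ℝ)^a)⁻¹)
  intro x hx
  rcases Nat.eq_zero_or_pos x with h0 | hpos
  · exfalso
    apply hx
    simp [h0, zero_pow (by omega : a ≠ 0)]
  · exact ⟨⟨x, hpos⟩, rfl⟩

lemma Z_two : Z 2 = Real.pi ^ 2 / 6 := by
  rw [Z_eq_nat_tsum (by norm_num)]
  have := hasSum_zeta_two.tsum_eq
  simpa [one_div] using this

lemma Z_complex {a : ℕ} (ha : 2 ≤ a) : ((Z a : ℝ) : ℂ) = riemannZeta a := by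
  rw [zeta_nat_eq_tsum_of_gt_one (by omega : 1 < a), Z_eq_nat_tsum (by omega)]
  rw [Complex.ofReal_tsum]
  apply tsum_congr
  intro n
  push_cast
  rw [one_div]

lemma sf' (a b c : ℕ) (h : (2 - a) + (2 - b) ≤ c) : Summable (f a b c) :=
  summable_f (c1 := 2 - a) (c2 := 2 - b) (by omega) (by omega) h

lemma T232 : T 2 3 2 = -(Z 2 * Z 5) + 2 * Z 7 := by
  have r1 := T_rec (a:=1) (b:=4) (c:=0) (sf' 1 5 1 (by norm_num)) (sf' 2 4 1 (by norm_num))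
  have r2 := T_rec (a:=0) (b:=4) (c:=1) (sf' 0 5 2 (by norm_num)) (sf' 1 4 2 (by norm_num))
  have r3 := T_rec (a:=1) (b:=3) (c:=1) (sf' 1 4 2 (by norm_num)) (sf' 2 3 2 (by norm_num))
  have r4 := T_rec (a:=0) (b:=3) (c:=2) (sf' 0 4 3 (by norm_num)) (sf' 1 3 3 (by norm_num))
  have r5 := T_rec (a:=1) (b:=2) (c:=2) (sf' 1 3 3 (by norm_num)) (sf' 2 2 3 (by norm_num))
  have r6 := T_rec (a:=0) (b:=2) (c:=3) (sf' 0 3 4 (by norm_num)) (sf' 1 2 4 (by norm_num))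
  have r7 := T_rec (a:=1) (b:=1) (c:=3) (sf' 1 2 4 (by norm_num)) (sf' 2 1 4 (by norm_num))
  have r8 := T_rec (a:=1) (b:=0) (c:=4) (sf' 1 1 5 (by norm_num)) (sf' 2 0 5 (by norm_num))
  have r9 := T_rec (a:=0) (b:=1) (c:=4) (sf' 0 2 5 (by norm_num)) (sf' 1 1 5 (by norm_num))
  have r10 := T_rec (a:=0) (b:=0) (c:=5) (sf' 0 1 6 (by norm_num)) (sf' 1 0 6 (by norm_num))
  have r11 := T_rec (a:=2) (b:=3) (c:=0) (sf' 2 4 1 (by norm_num)) (sf' 3 3 1 (by norm_num))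
  have r12 := T_rec (a:=2) (b:=2) (c:=1) (sf' 2 3 2 (by norm_num)) (sf' 3 2 2 (by norm_num))
  have r13 := T_rec (a:=2) (b:=1) (c:=2) (sf' 2 2 3 (by norm_num)) (sf' 3 1 3 (by norm_num))
  have r14 := T_rec (a:=2) (b:=0) (c:=3) (sf' 2 1 4 (by norm_num)) (sf' 3 0 4 (by norm_num))
  norm_num at r1 r2 r3 r4 r5 r6 r7 r8 r9 r10 r11 r12 r13 r14
  have sw1 : T 2 0 5 = T 0 2 5 := T_swap 2 0 5
  have sw2 : T 1 0 6 = T 0 1 6 := T_swap 1 0 6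
  have sw3 : T 3 0 4 = T 0 3 4 := T_swap 3 0 4
  have p1 : T 2 5 0 = Z 2 * Z 5 := T_prod (summable_Z (by norm_num)) (summable_Z (by norm_num))
  have p2 : T 3 4 0 = Z 3 * Z 4 := T_prod (summable_Z (by norm_num)) (summable_Z (by norm_num))
  have st1 := stuffle (b:=2) (c:=5) (by norm_num) (by norm_num)
  have st2 := stuffle (b:=3) (c:=4) (by norm_num) (by norm_num)
  norm_num at st1 st2
  have eu := euler
  linarith

end Torn

theorem tornheim_232 :
    ((tornheimN 2 3 2 : ℝ) : ℂ)
      = -((Real.pi : ℂ) ^ 2 / 6) * riemannZeta 5 + 2 * riemannZeta 7 := by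
  have hT : tornheimN 2 3 2 = Torn.T 2 3 2 := by
    rw [Torn.T, Summable.tsum_prod' (Torn.sf' 2 3 2 (by norm_num))
      (fun n => Torn.summable_f_inner (by norm_num) n)]
    apply tsum_congr
    intro n
    apply tsum_congr
    intro m
    rw [Torn.f, one_div]
    push_cast
    ring_nf
  have h5 : ((Torn.Z 5 : ℝ) : ℂ) = riemannZeta 5 := by
    have := Torn.Z_complex (a := 5) (by norm_num)
    rwa [show ((5:ℕ):ℂ) = (5:ℂ) by norm_num] at this
  have h7 : ((Torn.Z 7 : ℝ) : ℂ) = riemannZeta 7 := by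
    have := Torn.Z_complex (a := 7) (by norm_num)
    rwa [show ((7:ℕ):ℂ) = (7:ℂ) by norm_num] at this
  rw [hT, Torn.T232, Complex.ofReal_add, Complex.ofReal_neg, Complex.ofReal_mul,
    Complex.ofReal_mul, h5, h7, Torn.Z_two]
  push_cast
  ring
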